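/- Let P⃗ be a choice of N logical qubits stabilized by S̃ (a sequence of conjugal pairs with first-member weights ordered and achieving the pairwise minimum). If the set of first members {p₁(P⃗ᵢ)} is an unimprovable set with respect to S̃ that extends to the set Ũ(P⃗) of all members of pairs in P⃗, then P⃗ is an optimal choice of qubits: for any other choice P⃗' with the same generated group, M_S̃(P⃗)ᵢ ≥ M_S̃(P⃗')ᵢ for all i. -/

import Mathlib

/-- Pauli operators on `n` qubits modulo phases, encoded symplectically:
each qubit carries an (X-part, Z-part) pair in `ZMod 2`. Multiplication is addition. -/
abbrev Pauli (n : ℕ) : Type := Fin n → ZMod 2 × ZMod 2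

namespace Pauli

/-- The symplectic form encoding commutation: `0` iff the operators commute. -/
def sform {n : ℕ} (a b : Pauli n) : ZMod 2 :=
  ∑ i, ((a i).1 * (b i).2 + (a i).2 * (b i).1)

/-- Two Pauli operators commute. -/
def PComm {n : ℕ} (a b : Pauli n) : Prop := sform a b = 0

/-- The weight of a Pauli operator: number of qubits on which it acts non-trivially. -/
def weight {n : ℕ} (a : Pauli n) : ℕ :=
  (Finset.univ.filter fun i => a i ≠ 0).card

/-- `(a,b)` is a conjugal pair in relation to the set `X`: `a` and `b` anti-commute,
and each commutes with every member of `X` other than its partner. -/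
def ConjugalPair {n : ℕ} (a b : Pauli n) (X : Set (Pauli n)) : Prop :=
  ¬ PComm a b ∧ (∀ x ∈ X, x ≠ b → PComm a x) ∧ (∀ x ∈ X, x ≠ a → PComm b x)

/-- `e` is an undetectable error with respect to `S` acting on `l`:
it commutes with all of `S` and anti-commutes with `l`. -/
def UndetError {n : ℕ} (S : Set (Pauli n)) (l e : Pauli n) : Prop :=
  (∀ s ∈ S, PComm e s) ∧ ¬ PComm e l

/-- `ω S l`: minimum weight of an undetectable error w.r.t. `S` acting on `l`. -/
noncomputable def ω {n : ℕ} (S : Set (Pauli n)) (l : Pauli n) : ℕ :=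
  sInf (weight '' {e | UndetError S l e})

/-- Single-qubit Pauli X on qubit `k`. -/
def Xk {n : ℕ} (k : Fin n) : Pauli n := fun i => if i = k then (1, 0) else 0

/-- Single-qubit Pauli Z on qubit `k`. -/
def Zk {n : ℕ} (k : Fin n) : Pauli n := fun i => if i = k then (0, 1) else 0

/-- `Pk k false = X_k`, `Pk k true = Z_k`. -/
def Pk {n : ℕ} (k : Fin n) (p : Bool) : Pauli n := if p then Zk k else Xk k

/-- A finite set of Pauli operators is independent if no member is a product of the others. -/
def IndepSet {n : ℕ} (T : Finset (Pauli n)) : Prop :=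
  ∀ t ∈ T, t ∉ AddSubgroup.closure ((T.erase t : Finset (Pauli n)) : Set (Pauli n))

/-- `O` is an unimprovable set with respect to `S`. -/
def Unimprovable {n : ℕ} (S : Set (Pauli n)) (O : Finset (Pauli n)) : Prop :=
  ∀ X ⊆ O, ∀ h : X.Nonempty, ω S (∑ x ∈ X, x) = X.inf' h (fun x => ω S x)

/-- The unimprovable set `O` extends to `Q` (with respect to `S`). -/
def ExtendsTo {n : ℕ} (S : Set (Pauli n)) (O Q : Finset (Pauli n)) : Prop :=
  ∀ R ⊆ O ∪ Q, ∀ h : (R ∩ O).Nonempty,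
    ω S (∑ x ∈ R, x) ≤ (R ∩ O).inf' h (fun x => ω S x)

end Pauli

namespace Pauli

/-- `Ũ(P)`: all operators appearing in the pairs of `P`. -/
def UP {n : ℕ} (P : List (Pauli n × Pauli n)) : Finset (Pauli n) :=
  (P.map Prod.fst ++ P.map Prod.snd).toFinset

/-- `P` is a choice of qubits stabilized by `S`: a sequence of disjoint conjugal pairs in the
centralizer of `S`, each conjugal with respect to `S` together with all pair members, with the
first member of each pair achieving the pair minimum of ω, and the sequence of pair minima
non-decreasing. -/
def IsChoice {n : ℕ} (S : Set (Pauli n)) (P : List (Pauli n × Pauli n)) : Prop :=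
  (P.map Prod.fst ++ P.map Prod.snd).Nodup ∧
  (∀ q ∈ P, (∀ s ∈ S, PComm q.1 s) ∧ (∀ s ∈ S, PComm q.2 s)) ∧
  (∀ q ∈ P, ConjugalPair q.1 q.2 (S ∪ (UP P : Set (Pauli n)))) ∧
  (∀ q ∈ P, ω S q.1 = min (ω S q.1) (ω S q.2)) ∧
  (P.map fun q => min (ω S q.1) (ω S q.2)).Pairwise (· ≤ ·)

end Pauli


open scoped symmDiff

namespace Pauli

variable {n : ℕ}

lemma zmod2_add_self (z : ZMod 2) : z + z = 0 := by revert z; decide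

lemma zmod2_eq_one {z : ZMod 2} (h : z ≠ 0) : z = 1 := by revert z; decide

lemma padd_self (x : Pauli n) : x + x = 0 := by
  funext i
  apply Prod.ext <;> simp [zmod2_add_self]

lemma pneg_eq (x : Pauli n) : -x = x :=
  neg_eq_of_add_eq_zero_left (padd_self x)

lemma sform_comm (a b : Pauli n) : sform a b = sform b a := by
  unfold sform; congr 1; funext i; ring

lemma sform_add_left (a b c : Pauli n) : sform (a + b) c = sform a c + sform b c := by
  unfold sform
  rw [← Finset.sum_add_distrib]
  congr 1; funext i
  simp only [Pi.add_apply, Prod.fst_add, Prod.snd_add, add_mul]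
  ring

lemma sform_zero_left (c : Pauli n) : sform 0 c = 0 := by simp [sform]

lemma sform_sum_left {R : Finset (Pauli n)} (c : Pauli n) :
    sform (∑ x ∈ R, x) c = ∑ x ∈ R, sform x c := by
  induction R using Finset.cons_induction with
  | empty => simp [sform_zero_left]
  | cons x R hx ih => rw [Finset.sum_cons, Finset.sum_cons, sform_add_left, ih]

lemma sform_sum_right {R : Finset (Pauli n)} (c : Pauli n) :
    sform c (∑ x ∈ R, x) = ∑ x ∈ R, sform c x := by
  rw [sform_comm, sform_sum_left]; exact Finset.sum_congr rfl fun x _ => sform_comm x c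

lemma psum_symmDiff (R T : Finset (Pauli n)) :
    ∑ x ∈ R ∆ T, x = (∑ x ∈ R, x) + ∑ x ∈ T, x := by
  classical
  have h1 : R ∪ T = (R ∆ T) ∪ (R ∩ T) := by
    ext z; simp only [Finset.mem_union, Finset.mem_inter, Finset.mem_symmDiff]; tauto
  have hd : Disjoint (R ∆ T) (R ∩ T) := by
    rw [Finset.disjoint_left]
    intro z hz hz2
    simp only [Finset.mem_symmDiff, Finset.mem_inter] at hz hz2
    tauto
  have key : (∑ x ∈ R ∪ T, x) + ∑ x ∈ R ∩ T, (x : Pauli n) = (∑ x ∈ R, x) + ∑ x ∈ T, x :=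
    Finset.sum_union_inter
  rw [h1, Finset.sum_union hd] at key
  simpa [add_assoc, padd_self] using key

lemma add_rearrange {a b c d : Pauli n} (h : a + b = c + d) : a + c = b + d := by
  have h' := congrArg (fun z => z + (b + c)) h
  rw [show a + b + (b + c) = (a + c) + (b + b) by abel,
      show c + d + (b + c) = (b + d) + (c + c) by abel, padd_self, padd_self,
      add_zero, add_zero] at h'
  exact h'

/-- Membership in the additive closure of a finset is being a subset sum. -/
lemma mem_closure_iff_sum (T : Finset (Pauli n)) (x : Pauli n) :
    x ∈ AddSubgroup.closure (T : Set (Pauli n)) ↔ ∃ R ⊆ T, ∑ y ∈ R, y = x := by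
  classical
  constructor
  · intro hx
    let G : AddSubgroup (Pauli n) :=
      { carrier := {z | ∃ R ⊆ T, ∑ y ∈ R, y = z}
        zero_mem' := ⟨∅, by simp⟩
        add_mem' := by
          rintro a b ⟨Ra, hRa, rfl⟩ ⟨Rb, hRb, rfl⟩
          exact ⟨Ra ∆ Rb, (symmDiff_le_sup).trans (sup_le hRa hRb),
            psum_symmDiff Ra Rb⟩
        neg_mem' := by
          rintro a ⟨Ra, hRa, rfl⟩
          exact ⟨Ra, hRa, by rw [pneg_eq]⟩ }
    have : AddSubgroup.closure (T : Set (Pauli n)) ≤ G :=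
      AddSubgroup.closure_le G |>.2 (fun t ht => ⟨{t}, by simpa using ht, by simp⟩)
    exact this hx
  · rintro ⟨R, hR, rfl⟩
    exact AddSubgroup.sum_mem _ fun y hy => AddSubgroup.subset_closure (hR hy)

variable {S : Set (Pauli n)} {P : List (Pauli n × Pauli n)}

lemma fst_mem_UP {q : Pauli n × Pauli n} (hq : q ∈ P) : q.1 ∈ UP P := by
  rw [UP, List.mem_toFinset, List.mem_append]
  exact Or.inl (List.mem_map.2 ⟨q, hq, rfl⟩)

lemma snd_mem_UP {q : Pauli n × Pauli n} (hq : q ∈ P) : q.2 ∈ UP P := by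
  rw [UP, List.mem_toFinset, List.mem_append]
  exact Or.inr (List.mem_map.2 ⟨q, hq, rfl⟩)

/-- The basic facts about a conjugal pair of a choice. -/
lemma conj_of (hP : IsChoice S P) {q : Pauli n × Pauli n} (hq : q ∈ P) :
    sform q.1 q.2 = 1 ∧ (∀ z ∈ UP P, z ≠ q.2 → sform z q.1 = 0) ∧
      (∀ z ∈ UP P, z ≠ q.1 → sform z q.2 = 0) := by
  obtain ⟨hanti, hc1, hc2⟩ := hP.2.2.1 q hq
  refine ⟨zmod2_eq_one hanti, ?_, ?_⟩
  · intro z hz hzne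
    rw [sform_comm]
    exact hc1 z (Set.mem_union_right _ (Finset.mem_coe.2 hz)) hzne
  · intro z hz hzne
    rw [sform_comm]
    exact hc2 z (Set.mem_union_right _ (Finset.mem_coe.2 hz)) hzne

/-- Every member of `UP P` has a partner. -/
lemma partner_of_mem (hP : IsChoice S P) {x : Pauli n} (hx : x ∈ UP P) :
    ∃ y, sform x y = 1 ∧ ∀ z ∈ UP P, z ≠ x → sform z y = 0 := by
  rw [UP, List.mem_toFinset, List.mem_append] at hx
  rcases hx with hx | hx
  · obtain ⟨q, hq, rfl⟩ := List.mem_map.1 hx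
    obtain ⟨h1, _, h3⟩ := conj_of hP hq
    exact ⟨q.2, h1, h3⟩
  · obtain ⟨q, hq, rfl⟩ := List.mem_map.1 hx
    obtain ⟨h1, h2, _⟩ := conj_of hP hq
    exact ⟨q.1, by rw [sform_comm]; exact h1, h2⟩

lemma eq_empty_of_sum_eq_zero (hP : IsChoice S P) {R : Finset (Pauli n)}
    (hR : R ⊆ UP P) (h0 : ∑ x ∈ R, x = 0) : R = ∅ := by
  by_contra hne
  obtain ⟨x, hx⟩ := Finset.nonempty_iff_ne_empty.2 hne
  obtain ⟨y, hxy, hy⟩ := partner_of_mem hP (hR hx)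
  have hL : sform (∑ z ∈ R, z) y = 1 := by
    rw [sform_sum_left,
      Finset.sum_eq_single_of_mem x hx (fun z hz hzx => hy z (hR hz) hzx)]
    exact hxy
  rw [h0, sform_zero_left] at hL
  exact (by decide : (0 : ZMod 2) ≠ 1) hL

lemma sum_injOn (hP : IsChoice S P) {R R' : Finset (Pauli n)}
    (hR : R ⊆ UP P) (hR' : R' ⊆ UP P) (h : ∑ x ∈ R, x = ∑ x ∈ R', x) : R = R' := by
  have h0 : ∑ x ∈ R ∆ R', x = 0 := by
    rw [psum_symmDiff, h, padd_self]
  have := eq_empty_of_sum_eq_zero hP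
    ((symmDiff_le_sup (a := R) (b := R')).trans (sup_le hR hR')) h0
  exact Finset.symmDiff_eq_empty.1 this

lemma card_UP (hP : IsChoice S P) : (UP P).card = 2 * P.length := by
  rw [UP, List.toFinset_card_of_nodup hP.1]
  simp [List.length_append]
  ring

lemma sorted_min (hP : IsChoice S P) {j k : ℕ} (hj : j < P.length) (hk : k < P.length)
    (hjk : j ≤ k) :
    min (ω S (P[j]'hj).1) (ω S (P[j]'hj).2) ≤ min (ω S (P[k]'hk).1) (ω S (P[k]'hk).2) := by
  rcases eq_or_lt_of_le hjk with rfl | hlt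
  · exact le_refl _
  · have hp := hP.2.2.2.2
    rw [List.pairwise_iff_get] at hp
    have := hp ⟨j, by simpa using hj⟩ ⟨k, by simpa using hk⟩ (by simpa using hlt)
    simpa using this

end Pauli

/-- Optimality condition.  If the first members of the pairs of a choice `P` of
logical qubits stabilized by `S` form an unimprovable set extending to all pair members, then
`P` is an optimal choice: any other choice `P'` generating the same group has the same length
and satisfies `M_S̃(P')ᵢ ≤ M_S̃(P)ᵢ` for all `i`. -/
theorem stmt19 {n : ℕ} (S : Set (Pauli n)) (hS : ∀ s ∈ S, ∀ s' ∈ S, Pauli.PComm s s')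
    (P : List (Pauli n × Pauli n)) (hP : Pauli.IsChoice S P)
    (hunimp : Pauli.Unimprovable S (P.map Prod.fst).toFinset)
    (hext : Pauli.ExtendsTo S (P.map Prod.fst).toFinset (Pauli.UP P))
    (P' : List (Pauli n × Pauli n)) (hP' : Pauli.IsChoice S P')
    (hgen : AddSubgroup.closure ((Pauli.UP P' : Finset (Pauli n)) : Set (Pauli n)) =
            AddSubgroup.closure ((Pauli.UP P : Finset (Pauli n)) : Set (Pauli n))) :
    P.length = P'.length ∧
    ∀ i (hi : i < P.length) (hi' : i < P'.length),
      min (Pauli.ω S (P'.get ⟨i, hi'⟩).1) (Pauli.ω S (P'.get ⟨i, hi'⟩).2) ≤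
      min (Pauli.ω S (P.get ⟨i, hi⟩).1) (Pauli.ω S (P.get ⟨i, hi⟩).2) := by
  classical
  obtain ⟨hnodup, hcent, hconj, hmin, hsort⟩ := hP
  obtain ⟨hnodup', hcent', hconj', hmin', hsort'⟩ := hP'
  have hPfull : Pauli.IsChoice S P := ⟨hnodup, hcent, hconj, hmin, hsort⟩
  have hPfull' : Pauli.IsChoice S P' := ⟨hnodup', hcent', hconj', hmin', hsort'⟩
  -- Part 1 : lengths are equal
  have hlen : P.length = P'.length := by
    have hcoe : ∀ x : Pauli n, (∃ R ⊆ Pauli.UP P, ∑ y ∈ R, y = x) ↔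
        (∃ R ⊆ Pauli.UP P', ∑ y ∈ R, y = x) := by
      intro x
      rw [← Pauli.mem_closure_iff_sum, ← Pauli.mem_closure_iff_sum, hgen]
    have himg : (Pauli.UP P).powerset.image (fun R => ∑ y ∈ R, y)
        = (Pauli.UP P').powerset.image (fun R => ∑ y ∈ R, y) := by
      ext x
      simp only [Finset.mem_image, Finset.mem_powerset]
      constructor
      · rintro ⟨R, hR, rfl⟩
        exact (hcoe _).1 ⟨R, hR, rfl⟩
      · rintro ⟨R, hR, rfl⟩
        exact (hcoe _).2 ⟨R, hR, rfl⟩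
    have c1 : ((Pauli.UP P).powerset.image (fun R => ∑ y ∈ R, y)).card
        = 2 ^ (2 * P.length) := by
      rw [Finset.card_image_of_injOn, Finset.card_powerset, Pauli.card_UP hPfull]
      intro R hR R' hR' h
      exact Pauli.sum_injOn hPfull (Finset.mem_powerset.1 hR) (Finset.mem_powerset.1 hR') h
    have c2 : ((Pauli.UP P').powerset.image (fun R => ∑ y ∈ R, y)).card
        = 2 ^ (2 * P'.length) := by
      rw [Finset.card_image_of_injOn, Finset.card_powerset, Pauli.card_UP hPfull']
      intro R hR R' hR' h
      exact Pauli.sum_injOn hPfull' (Finset.mem_powerset.1 hR) (Finset.mem_powerset.1 hR') h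
    rw [himg, c2] at c1
    have := Nat.pow_right_injective (le_refl 2) c1
    omega
  refine ⟨hlen, ?_⟩
  intro i hi hi'
  simp only [List.get_eq_getElem]
  by_contra hcon
  push_neg at hcon
  set mP := min (Pauli.ω S (P[i]'hi).1) (Pauli.ω S (P[i]'hi).2) with hmPdef
  set mP' := min (Pauli.ω S (P'[i]'hi').1) (Pauli.ω S (P'[i]'hi').2) with hmPdef'
  -- hcon : mP < mP'
  -- nodup components
  have hfstnod : (P.map Prod.fst).Nodup := (List.nodup_append.mp hnodup).1
  have hsndnod : (P.map Prod.snd).Nodup := (List.nodup_append.mp hnodup).2.1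
  have hdisj : (P.map Prod.fst).Disjoint (P.map Prod.snd) := (List.nodup_append'.mp hnodup).2.2
  -- the three key finsets
  set A : Finset (Pauli n) :=
    ((P'.drop i).map Prod.fst ++ (P'.drop i).map Prod.snd).toFinset with hAdef
  set B : Finset (Pauli n) := ((P.take (i+1)).map Prod.snd).toFinset with hBdef
  set CK : Finset (Pauli n) :=
    (P.map Prod.snd ++ (P.drop (i+1)).map Prod.fst).toFinset with hCKdef
  have hA_mem : ∀ x ∈ A, ∃ q ∈ P'.drop i, x = q.1 ∨ x = q.2 := by
    intro x hx
    rw [hAdef, List.mem_toFinset, List.mem_append] at hx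
    rcases hx with hx | hx
    · obtain ⟨q, hq, rfl⟩ := List.mem_map.1 hx
      exact ⟨q, hq, Or.inl rfl⟩
    · obtain ⟨q, hq, rfl⟩ := List.mem_map.1 hx
      exact ⟨q, hq, Or.inr rfl⟩
  have hAsub : ∀ x ∈ A, x ∈ Pauli.UP P' := by
    intro x hx
    obtain ⟨q, hq, hc⟩ := hA_mem x hx
    have hqP' : q ∈ P' := List.mem_of_mem_drop hq
    rcases hc with rfl | rfl
    · exact Pauli.fst_mem_UP hqP'
    · exact Pauli.snd_mem_UP hqP'
  have hA_idx : ∀ x ∈ A, ∃ (j : ℕ) (hj : j < P'.length),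
      i ≤ j ∧ (x = (P'[j]'hj).1 ∨ x = (P'[j]'hj).2) := by
    intro x hx
    obtain ⟨q, hq, hc⟩ := hA_mem x hx
    obtain ⟨k, hk, hkq⟩ := List.mem_iff_getElem.1 hq
    rw [List.length_drop] at hk
    refine ⟨i + k, by omega, by omega, ?_⟩
    have : (P'.drop i)[k] = P'[i + k]'(by omega) := by
      simp [List.getElem_drop]
    rw [this] at hkq
    rcases hc with rfl | rfl
    · exact Or.inl (by rw [← hkq])
    · exact Or.inr (by rw [← hkq])
  have hA_partner : ∀ x ∈ A, ∃ y ∈ A, Pauli.sform x y = 1 ∧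
      ∀ z ∈ Pauli.UP P', z ≠ x → Pauli.sform z y = 0 := by
    intro x hx
    obtain ⟨q, hq, hc⟩ := hA_mem x hx
    have hqP' : q ∈ P' := List.mem_of_mem_drop hq
    obtain ⟨h1, h2, h3⟩ := Pauli.conj_of hPfull' hqP'
    rcases hc with rfl | rfl
    · refine ⟨q.2, ?_, h1, h3⟩
      rw [hAdef, List.mem_toFinset, List.mem_append]
      exact Or.inr (List.mem_map.2 ⟨q, hq, rfl⟩)
    · refine ⟨q.1, ?_, by rw [Pauli.sform_comm]; exact h1, h2⟩
      rw [hAdef, List.mem_toFinset, List.mem_append]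
      exact Or.inl (List.mem_map.2 ⟨q, hq, rfl⟩)
  -- lower bound for members of A
  have h1 : ∀ x ∈ A, mP' ≤ Pauli.ω S x := by
    intro x hx
    obtain ⟨j, hj, hij, hc⟩ := hA_idx x hx
    have hms := Pauli.sorted_min hPfull' hi' hj hij
    rcases hc with rfl | rfl
    · exact hms.trans (min_le_left _ _)
    · exact hms.trans (min_le_right _ _)
  -- every member of A is a subset sum of CK
  have h2 : ∀ x ∈ A, ∃ U ⊆ CK, ∑ u ∈ U, u = x := by
    intro x hx
    have hxc : x ∈ AddSubgroup.closure ((Pauli.UP P : Finset (Pauli n)) : Set (Pauli n)) := by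
      rw [← hgen]
      exact AddSubgroup.subset_closure (Finset.mem_coe.2 (hAsub x hx))
    obtain ⟨R, hR, hRs⟩ := (Pauli.mem_closure_iff_sum _ _).1 hxc
    by_cases hex : (R ∩ ((P.take (i+1)).map Prod.fst).toFinset).Nonempty
    · exfalso
      obtain ⟨x0, hx0⟩ := hex
      rw [Finset.mem_inter] at hx0
      obtain ⟨hx0R, hx0low⟩ := hx0
      rw [List.mem_toFinset] at hx0low
      obtain ⟨q0, hq0take, hq0⟩ := List.mem_map.1 hx0low
      obtain ⟨j0, hj0len, hj0⟩ := List.mem_iff_getElem.1 hq0take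
      rw [List.length_take] at hj0len
      have hj0P : j0 < P.length := by omega
      have hj0i : j0 ≤ i := by omega
      have hq0P : q0 = P[j0]'hj0P := by
        rw [← hj0]; simp
      have hO : x0 ∈ (P.map Prod.fst).toFinset := by
        rw [List.mem_toFinset]
        exact List.mem_map.2 ⟨q0, (List.take_sublist (i+1) P).subset hq0take, hq0⟩
      have hne2 : (R ∩ (P.map Prod.fst).toFinset).Nonempty :=
        ⟨x0, Finset.mem_inter.2 ⟨hx0R, hO⟩⟩
      have hbound := hext R (hR.trans Finset.subset_union_right) hne2
      have hle : (R ∩ (P.map Prod.fst).toFinset).inf' hne2 (fun x => Pauli.ω S x)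
          ≤ Pauli.ω S x0 := Finset.inf'_le _ (Finset.mem_inter.2 ⟨hx0R, hO⟩)
      have hxlow : Pauli.ω S x0 ≤ mP := by
        have heq := hmin (P[j0]'hj0P) (List.getElem_mem hj0P)
        have hms := Pauli.sorted_min hPfull hj0P hi hj0i
        rw [← hq0, hq0P, heq]
        exact hms
      have hge := h1 x hx
      rw [hRs] at hbound
      omega
    · refine ⟨R, ?_, hRs⟩
      intro z hz
      have hzUP := hR hz
      rw [Pauli.UP, List.mem_toFinset, List.mem_append] at hzUP
      rw [hCKdef, List.mem_toFinset, List.mem_append]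
      rcases hzUP with hzf | hzs
      · obtain ⟨q, hqP, hq⟩ := List.mem_map.1 hzf
        obtain ⟨j, hjlen, hj⟩ := List.mem_iff_getElem.1 hqP
        by_cases hji : j ≤ i
        · exfalso
          apply hex
          refine ⟨z, Finset.mem_inter.2 ⟨hz, ?_⟩⟩
          rw [List.mem_toFinset]
          refine List.mem_map.2 ⟨q, ?_, hq⟩
          rw [List.mem_iff_getElem]
          exact ⟨j, by rw [List.length_take]; omega, by simpa using hj⟩
        · right
          refine List.mem_map.2 ⟨q, ?_, hq⟩
          rw [List.mem_iff_getElem]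
          refine ⟨j - (i+1), by rw [List.length_drop]; omega, ?_⟩
          rw [List.getElem_drop]
          rw [← hj]
          congr 1
          omega
      · exact Or.inl hzs
  -- B facts
  have hB_idx : ∀ b ∈ B, ∃ (j : ℕ) (hj : j < P.length), j ≤ i ∧ b = (P[j]'hj).2 := by
    intro b hb
    rw [hBdef, List.mem_toFinset] at hb
    obtain ⟨q, hqtake, hq⟩ := List.mem_map.1 hb
    obtain ⟨j, hjlen, hj⟩ := List.mem_iff_getElem.1 hqtake
    rw [List.length_take] at hjlen
    refine ⟨j, by omega, by omega, ?_⟩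
    have : q = P[j]'(by omega) := by rw [← hj]; simp
    rw [← hq, this]
  have hBsubUP : ∀ b ∈ B, b ∈ Pauli.UP P := by
    intro b hb
    obtain ⟨j, hj, _, rfl⟩ := hB_idx b hb
    exact Pauli.snd_mem_UP (List.getElem_mem hj)
  have hBsubCK : ∀ b ∈ B, b ∈ CK := by
    intro b hb
    obtain ⟨j, hj, _, rfl⟩ := hB_idx b hb
    rw [hCKdef, List.mem_toFinset, List.mem_append]
    exact Or.inl (List.mem_map.2 ⟨P[j]'hj, List.getElem_mem hj, rfl⟩)
  -- members of B commute with members of CK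
  have hsBU : ∀ b ∈ B, ∀ u ∈ CK, Pauli.sform b u = 0 := by
    intro b hb u hu
    obtain ⟨jb, hjb, hjbi, rfl⟩ := hB_idx b hb
    have hqbP : P[jb]'hjb ∈ P := List.getElem_mem hjb
    obtain ⟨_, hc1, hc2⟩ := hconj (P[jb]'hjb) hqbP
    rw [hCKdef, List.mem_toFinset, List.mem_append] at hu
    have huUP : u ∈ Pauli.UP P := by
      rw [Pauli.UP, List.mem_toFinset, List.mem_append]
      rcases hu with hus | huf
      · exact Or.inr hus
      · obtain ⟨q, hq, rfl⟩ := List.mem_map.1 huf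
        exact Or.inl (List.mem_map.2 ⟨q, List.mem_of_mem_drop hq, rfl⟩)
    have hune : u ≠ (P[jb]'hjb).1 := by
      rcases hu with hus | huf
      · intro heq
        obtain ⟨q, hq, hq2⟩ := List.mem_map.1 hus
        exact hdisj (List.mem_map.2 ⟨P[jb]'hjb, hqbP, rfl⟩) (heq ▸ hus)
      · obtain ⟨q, hq, rfl⟩ := List.mem_map.1 huf
        obtain ⟨l, hllen, hl⟩ := List.mem_iff_getElem.1 hq
        rw [List.length_drop] at hllen
        have hlP : i + 1 + l < P.length := by omega
        have hql : q = P[i+1+l]'hlP := by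
          rw [← hl]; simp [List.getElem_drop]
        rw [hql]
        intro heq
        have := (List.Nodup.get_inj_iff hfstnod
          (i := ⟨i+1+l, by simpa using hlP⟩) (j := ⟨jb, by simpa using hjb⟩)).1 (by simpa using heq)
        simp at this
        omega
    have := hc2 u (Set.mem_union_right _ (Finset.mem_coe.2 huUP)) hune
    exact this
  -- the crossing lemma
  have hcross : ∀ R ⊆ A, ∀ T ⊆ B, (∑ x ∈ R, x = ∑ x ∈ T, x) → R = ∅ ∧ T = ∅ := by
    intro R hRA T hTB hRT
    have hRe : R = ∅ := by
      by_contra hne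
      obtain ⟨x, hx⟩ := Finset.nonempty_iff_ne_empty.2 hne
      obtain ⟨y, hyA, hxy1, hy0⟩ := hA_partner x (hRA hx)
      have hL : Pauli.sform (∑ z ∈ R, z) y = 1 := by
        rw [Pauli.sform_sum_left,
          Finset.sum_eq_single_of_mem x hx (fun z hz hzx => hy0 z (hAsub _ (hRA hz)) hzx)]
        exact hxy1
      obtain ⟨U, hU, hUs⟩ := h2 y hyA
      have hRt : Pauli.sform (∑ z ∈ T, z) y = 0 := by
        rw [← hUs, Pauli.sform_sum_right]
        apply Finset.sum_eq_zero
        intro u hu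
        rw [Pauli.sform_sum_left]
        apply Finset.sum_eq_zero
        intro b hb
        exact hsBU b (hTB hb) u (hU hu)
      rw [hRT, hRt] at hL
      exact (by decide : (0 : ZMod 2) ≠ 1) hL
    have hT0 : ∑ x ∈ T, x = 0 := by
      rw [← hRT, hRe, Finset.sum_empty]
    exact ⟨hRe, Pauli.eq_empty_of_sum_eq_zero hPfull (fun b hb => hBsubUP b (hTB hb)) hT0⟩
  -- cardinalities
  have hcA : A.card = (P'.length - i) + (P'.length - i) := by
    rw [hAdef, List.toFinset_card_of_nodup]
    · simp [List.length_append, List.length_drop]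
    · exact hnodup'.sublist
        (List.Sublist.append ((List.drop_sublist i P').map Prod.fst)
          ((List.drop_sublist i P').map Prod.snd))
  have hcB : B.card = i + 1 := by
    rw [hBdef, List.toFinset_card_of_nodup]
    · rw [List.length_map, List.length_take]; omega
    · exact hsndnod.sublist ((List.take_sublist (i+1) P).map Prod.snd)
  have hcCK : CK.card = P.length + (P.length - (i+1)) := by
    rw [hCKdef, List.toFinset_card_of_nodup]
    · simp [List.length_append, List.length_drop]
    · refine List.Nodup.append hsndnod
        (hfstnod.sublist ((List.drop_sublist (i+1) P).map Prod.fst)) ?_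
      intro a ha hb
      have : a ∈ P.map Prod.fst := by
        obtain ⟨q, hq, rfl⟩ := List.mem_map.1 hb
        exact List.mem_map.2 ⟨q, List.mem_of_mem_drop hq, rfl⟩
      exact hdisj this ha
  -- the counting argument
  have hmaps : ∀ p ∈ A.powerset ×ˢ B.powerset,
      ((∑ x ∈ p.1, x) + ∑ x ∈ p.2, x) ∈ CK.powerset.image (fun R => ∑ y ∈ R, y) := by
    intro p hp
    rw [Finset.mem_product, Finset.mem_powerset, Finset.mem_powerset] at hp
    obtain ⟨hp1, hp2⟩ := hp
    have hmem : ((∑ x ∈ p.1, x) + ∑ x ∈ p.2, x) ∈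
        AddSubgroup.closure ((CK : Finset (Pauli n)) : Set (Pauli n)) := by
      apply AddSubgroup.add_mem
      · apply AddSubgroup.sum_mem
        intro x hx
        obtain ⟨U, hU, hUs⟩ := h2 x (hp1 hx)
        rw [← hUs]
        exact AddSubgroup.sum_mem _ fun u hu => AddSubgroup.subset_closure
          (Finset.mem_coe.2 (hU hu))
      · exact AddSubgroup.sum_mem _ fun b hb => AddSubgroup.subset_closure
          (Finset.mem_coe.2 (hBsubCK b (hp2 hb)))
    obtain ⟨U, hU, hUs⟩ := (Pauli.mem_closure_iff_sum _ _).1 hmem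
    exact Finset.mem_image.2 ⟨U, Finset.mem_powerset.2 hU, hUs⟩
  have hinj2 : Set.InjOn (fun p : Finset (Pauli n) × Finset (Pauli n) =>
      (∑ x ∈ p.1, x) + ∑ x ∈ p.2, x) ((A.powerset ×ˢ B.powerset : Finset _) : Set _) := by
    intro p hp q hq h
    simp only [Finset.mem_coe, Finset.mem_product, Finset.mem_powerset] at hp hq
    obtain ⟨hp1, hp2⟩ := hp
    obtain ⟨hq1, hq2⟩ := hq
    simp only at h
    have h' := Pauli.add_rearrange h
    rw [← Pauli.psum_symmDiff, ← Pauli.psum_symmDiff] at h'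
    obtain ⟨he1, he2⟩ := hcross (p.1 ∆ q.1) ((symmDiff_le_sup).trans (sup_le hp1 hq1))
      (p.2 ∆ q.2) ((symmDiff_le_sup).trans (sup_le hp2 hq2)) h'
    exact Prod.ext (Finset.symmDiff_eq_empty.1 he1) (Finset.symmDiff_eq_empty.1 he2)
  have hcard := Finset.card_le_card_of_injOn _ hmaps hinj2
  rw [Finset.card_product, Finset.card_powerset, Finset.card_powerset, hcA, hcB] at hcard
  have h2c : ((CK.powerset.image (fun R => ∑ y ∈ R, y)).card : ℕ) ≤ 2 ^ CK.card := by
    calc (CK.powerset.image (fun R => ∑ y ∈ R, y)).card ≤ CK.powerset.card :=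
          Finset.card_image_le
      _ = 2 ^ CK.card := Finset.card_powerset CK
  have hfin := hcard.trans h2c
  rw [hcCK, ← pow_add] at hfin
  have hexp : ((P'.length - i) + (P'.length - i)) + (i + 1)
      ≤ P.length + (P.length - (i+1)) :=
    (Nat.pow_le_pow_iff_right (le_refl 2)).1 hfin
  omega
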